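/- Let u, v ∈ ℝ^d, let q ∈ (0,2], let I_u be the index set of the M largest-magnitude entries of u, let I_v be the index set of the M largest-magnitude entries of v, and let u|_{top(M)} (resp. v|_{top(M)}) be u (resp. v) with all entries outside I_u (resp. I_v) set to 0. Then (4^{max(q−1,0)} + 1) · Σ_{i ∈ I_u ∪ I_v} |u_i − v_i|^q ≥ ‖u|_{top(M)} − v‖_q^q − 4^{max(q−1,0)} · ‖v − v|_{top(M)}‖_q^q. -/

import Mathlib

open Finset

lemma two_term (q a b : ℝ) (hq0 : 0 < q) (ha : 0 ≤ a) (hb : 0 ≤ b) :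
    (a + b) ^ q ≤ (2 : ℝ) ^ (max (q - 1) 0) * (a ^ q + b ^ q) := by
  lift a to NNReal using ha
  lift b to NNReal using hb
  rcases le_or_gt q 1 with h | h
  · rw [max_eq_right (by linarith), Real.rpow_zero, one_mul]
    have := NNReal.rpow_add_le_add_rpow a b hq0.le h
    push_cast [← NNReal.coe_rpow] at this ⊢
    exact_mod_cast this
  · rw [max_eq_left (by linarith)]
    have := NNReal.rpow_add_le_mul_rpow_add_rpow a b h.le
    push_cast [← NNReal.coe_rpow] at this ⊢
    exact_mod_cast this

lemma three_term (q a b c : ℝ) (hq0 : 0 < q) (ha : 0 ≤ a) (hb : 0 ≤ b) (hc : 0 ≤ c) :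
    (a + b + c) ^ q ≤ (4 : ℝ) ^ (max (q - 1) 0) * (a ^ q + b ^ q + c ^ q) := by
  set m := max (q - 1) 0 with hm
  have hm0 : 0 ≤ m := le_max_right _ _
  have h1 : (a + (b + c)) ^ q ≤ (2:ℝ) ^ m * (a ^ q + (b + c) ^ q) :=
    two_term q a (b + c) hq0 ha (by linarith)
  have h2 : (b + c) ^ q ≤ (2:ℝ) ^ m * (b ^ q + c ^ q) := two_term q b c hq0 hb hc
  have h4 : (4:ℝ) ^ m = (2:ℝ) ^ m * (2:ℝ) ^ m := by
    rw [← Real.mul_rpow (by norm_num) (by norm_num)]; norm_num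
  have h2m : (1:ℝ) ≤ (2:ℝ) ^ m := Real.one_le_rpow (by norm_num) hm0
  have haq : 0 ≤ a ^ q := Real.rpow_nonneg ha q
  have hbq : 0 ≤ b ^ q := Real.rpow_nonneg hb q
  have hcq : 0 ≤ c ^ q := Real.rpow_nonneg hc q
  have h2m4 : (2:ℝ) ^ m ≤ (4:ℝ) ^ m := by nlinarith [Real.rpow_pos_of_pos (show (0:ℝ)<2 by norm_num) m]
  have habc : a + b + c = a + (b + c) := by ring
  rw [habc]
  have h2mpos : (0:ℝ) < (2:ℝ) ^ m := by linarith
  calc (a + (b + c)) ^ q ≤ (2:ℝ) ^ m * (a ^ q + (b + c) ^ q) := h1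
    _ ≤ (2:ℝ) ^ m * (a ^ q + (2:ℝ) ^ m * (b ^ q + c ^ q)) :=
        mul_le_mul_of_nonneg_left (add_le_add_right h2 _) h2mpos.le
    _ = (2:ℝ) ^ m * a ^ q + (4:ℝ) ^ m * (b ^ q + c ^ q) := by rw [h4]; ring
    _ ≤ (4:ℝ) ^ m * (a ^ q + b ^ q + c ^ q) := by nlinarith [mul_le_mul_of_nonneg_right h2m4 haq]

theorem stmt3 (d M : ℕ) (q : ℝ) (hq0 : 0 < q) (hq2 : q ≤ 2)
    (u v : Fin d → ℝ) (Iu Iv : Finset (Fin d)) (hIu : Iu.card = M) (hIv : Iv.card = M)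
    (htopu : ∀ i ∈ Iu, ∀ j ∉ Iu, |u j| ≤ |u i|)
    (htopv : ∀ i ∈ Iv, ∀ j ∉ Iv, |v j| ≤ |v i|) :
    (∑ i, |(if i ∈ Iu then u i else 0) - v i| ^ q)
        - (4 : ℝ) ^ (max (q - 1) 0) * ∑ i, |v i - (if i ∈ Iv then v i else 0)| ^ q
      ≤ ((4 : ℝ) ^ (max (q - 1) 0) + 1) * ∑ i ∈ Iu ∪ Iv, |u i - v i| ^ q := by
  set C := (4 : ℝ) ^ (max (q - 1) 0) with hC
  have hC1 : (1:ℝ) ≤ C := Real.one_le_rpow (by norm_num) (le_max_right _ _)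
  set A := Iu \ Iv with hA
  set B := Iv \ Iu with hB
  have hcard : B.card = A.card := by
    rw [hA, hB, card_sdiff_comm (hIu.trans hIv.symm)]
  -- decompose first sum
  have hS1 : (∑ i, |(if i ∈ Iu then u i else 0) - v i| ^ q)
      = ∑ i ∈ Iu, |u i - v i| ^ q + ∑ i ∈ Iuᶜ, |v i| ^ q := by
    rw [← Finset.sum_add_sum_compl Iu]
    congr 1
    · exact Finset.sum_congr rfl (fun i hi => by rw [if_pos hi])
    · refine Finset.sum_congr rfl (fun i hi => ?_)
      rw [if_neg (by simpa using hi), zero_sub, abs_neg]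
  have hS2 : (∑ i, |v i - (if i ∈ Iv then v i else 0)| ^ q)
      = ∑ i ∈ Ivᶜ, |v i| ^ q := by
    rw [← Finset.sum_add_sum_compl Iv]
    have : ∑ i ∈ Iv, |v i - (if i ∈ Iv then v i else 0)| ^ q = 0 := by
      refine Finset.sum_eq_zero (fun i hi => ?_)
      rw [if_pos hi, sub_self, abs_zero, Real.zero_rpow hq0.ne']
    rw [this, zero_add]
    exact Finset.sum_congr rfl (fun i hi => by rw [if_neg (by simpa using hi), sub_zero])
  -- split complements
  have hcompU : Iuᶜ = B ∪ (Iu ∪ Iv)ᶜ := by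
    ext i; simp [hB, Finset.mem_compl, Finset.mem_sdiff]; tauto
  have hcompV : Ivᶜ = A ∪ (Iu ∪ Iv)ᶜ := by
    ext i; simp [hA, Finset.mem_compl, Finset.mem_sdiff]; tauto
  have hdisjB : Disjoint B (Iu ∪ Iv)ᶜ := by
    exact disjoint_compl_right.mono_left ((Finset.sdiff_subset).trans Finset.subset_union_right)
  have hdisjA : Disjoint A (Iu ∪ Iv)ᶜ := by
    exact disjoint_compl_right.mono_left ((Finset.sdiff_subset).trans Finset.subset_union_left)
  have hU : ∑ i ∈ Iuᶜ, |v i| ^ q = ∑ i ∈ B, |v i| ^ q + ∑ i ∈ (Iu ∪ Iv)ᶜ, |v i| ^ q := by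
    rw [hcompU, Finset.sum_union hdisjB]
  have hV : ∑ i ∈ Ivᶜ, |v i| ^ q = ∑ i ∈ A, |v i| ^ q + ∑ i ∈ (Iu ∪ Iv)ᶜ, |v i| ^ q := by
    rw [hcompV, Finset.sum_union hdisjA]
  -- key pairing bound
  have e : (B : Type _) ≃ (A : Type _) := Finset.equivOfCardEq hcard
  have key : ∑ i ∈ B, |v i| ^ q
      ≤ C * (∑ i ∈ B, |u i - v i| ^ q + ∑ j ∈ A, |u j - v j| ^ q + ∑ j ∈ A, |v j| ^ q) := by
    have hpt : ∀ x : B, |v x| ^ q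
        ≤ C * (|u x - v x| ^ q + |u (e x) - v (e x)| ^ q + |v (e x)| ^ q) := by
      intro x
      have hxB : (x : Fin d) ∈ B := x.2
      have hjA : ((e x : Fin d)) ∈ A := (e x).2
      have hxnotu : (x : Fin d) ∉ Iu := (Finset.mem_sdiff.mp hxB).2
      have hju : ((e x : Fin d)) ∈ Iu := (Finset.mem_sdiff.mp hjA).1
      have h1 : |v x| ≤ |u x - v x| + |u (e x) - v (e x)| + |v (e x)| := by
        have h2 : |u (x : Fin d)| ≤ |u (e x : Fin d)| := htopu _ hju _ hxnotu
        have h3 : |v (x : Fin d)| ≤ |u x - v x| + |u (x : Fin d)| := by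
          have := abs_sub_abs_le_abs_sub (v (x : Fin d)) (u (x : Fin d))
          have := abs_sub_comm (v (x : Fin d)) (u (x : Fin d))
          calc |v (x : Fin d)| ≤ |v x - u x| + |u (x : Fin d)| := by
                have := abs_add_le (v (x:Fin d) - u x) (u (x:Fin d)); simpa using this
            _ = |u x - v x| + |u (x : Fin d)| := by rw [abs_sub_comm]
        have h4 : |u (e x : Fin d)| ≤ |u (e x) - v (e x)| + |v (e x : Fin d)| := by
          have := abs_add_le (u (e x:Fin d) - v (e x)) (v (e x:Fin d)); simpa using this
        linarith
      calc |v (x : Fin d)| ^ q ≤ (|u x - v x| + |u (e x) - v (e x)| + |v (e x)|) ^ q :=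
            Real.rpow_le_rpow (abs_nonneg _) h1 hq0.le
        _ ≤ C * (|u x - v x| ^ q + |u (e x) - v (e x)| ^ q + |v (e x)| ^ q) :=
            three_term q _ _ _ hq0 (abs_nonneg _) (abs_nonneg _) (abs_nonneg _)
    have hsum : ∑ x : B, |v (x : Fin d)| ^ q
        ≤ ∑ x : B, C * (|u x - v x| ^ q + |u (e x) - v (e x)| ^ q + |v (e x)| ^ q) :=
      Finset.sum_le_sum (fun x _ => hpt x)
    have h5 : ∑ x : B, |u (e x : Fin d) - v (e x)| ^ q = ∑ j ∈ A, |u j - v j| ^ q := by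
      rw [Equiv.sum_comp e (fun y : A => |u (y : Fin d) - v y| ^ q),
        Finset.sum_coe_sort A (fun j => |u j - v j| ^ q)]
    have h6 : ∑ x : B, |v (e x : Fin d)| ^ q = ∑ j ∈ A, |v j| ^ q := by
      rw [Equiv.sum_comp e (fun y : A => |v (y : Fin d)| ^ q),
        Finset.sum_coe_sort A (fun j => |v j| ^ q)]
    calc ∑ i ∈ B, |v i| ^ q = ∑ x : B, |v (x : Fin d)| ^ q :=
          (Finset.sum_coe_sort B fun i => |v i| ^ q).symm
      _ ≤ ∑ x : B, C * (|u x - v x| ^ q + |u (e x) - v (e x)| ^ q + |v (e x)| ^ q) := hsum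
      _ = C * (∑ x : B, |u (x:Fin d) - v x| ^ q + ∑ x : B, |u (e x : Fin d) - v (e x)| ^ q
            + ∑ x : B, |v (e x : Fin d)| ^ q) := by
          rw [← Finset.mul_sum]; congr 1; rw [Finset.sum_add_distrib, Finset.sum_add_distrib]
      _ = C * (∑ i ∈ B, |u i - v i| ^ q + ∑ j ∈ A, |u j - v j| ^ q + ∑ j ∈ A, |v j| ^ q) := by
          rw [h5, h6, Finset.sum_coe_sort B (fun i => |u i - v i| ^ q)]
  -- remaining sub-sum comparisons
  have hnn : ∀ (s : Finset (Fin d)), (0:ℝ) ≤ ∑ i ∈ s, |u i - v i| ^ q :=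
    fun s => Finset.sum_nonneg fun i _ => Real.rpow_nonneg (abs_nonneg _) q
  have hPS : ∑ i ∈ Iu, |u i - v i| ^ q ≤ ∑ i ∈ Iu ∪ Iv, |u i - v i| ^ q :=
    Finset.sum_le_sum_of_subset_of_nonneg Finset.subset_union_left
      (fun i _ _ => Real.rpow_nonneg (abs_nonneg _) q)
  have hABS : ∑ i ∈ B, |u i - v i| ^ q + ∑ j ∈ A, |u j - v j| ^ q
      ≤ ∑ i ∈ Iu ∪ Iv, |u i - v i| ^ q := by
    rw [← Finset.sum_union (disjoint_sdiff_sdiff)]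
    exact Finset.sum_le_sum_of_subset_of_nonneg
      (Finset.union_subset ((Finset.sdiff_subset).trans Finset.subset_union_right)
        ((Finset.sdiff_subset).trans Finset.subset_union_left))
      (fun i _ _ => Real.rpow_nonneg (abs_nonneg _) q)
  have hR : (0:ℝ) ≤ ∑ i ∈ (Iu ∪ Iv)ᶜ, |v i| ^ q :=
    Finset.sum_nonneg fun i _ => Real.rpow_nonneg (abs_nonneg _) q
  have hTnn : (0:ℝ) ≤ ∑ j ∈ A, |v j| ^ q :=
    Finset.sum_nonneg fun i _ => Real.rpow_nonneg (abs_nonneg _) q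
  rw [hS1, hS2, hU, hV]
  nlinarith [hnn (Iu ∪ Iv), hnn B, hnn A]
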